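/- arXiv:2409.06394 — 4 statements merged into one kernel-verified Lean document; each statement's English description precedes it below -/
import Mathlib

section
/- The function f(x) = x·(x − 1 − log x)² satisfies 0 < f(x) < 1 for every x in the open interval (0,1). In fact f(x) ≤ 8/9 for all x ∈ (0,1). -/
/-- The function `f x = x * (x - 1 - log x)^2` satisfies `0 < f x < 1`,
and in fact `f x ≤ 8/9`, for every `x ∈ (0,1)`. -/
theorem stmt_0 (x : ℝ) (hx : x ∈ Set.Ioo (0:ℝ) 1) :
    0 < x * (x - 1 - Real.log x)^2 ∧
    x * (x - 1 - Real.log x)^2 ≤ 8/9 ∧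
    x * (x - 1 - Real.log x)^2 < 1 := by
  obtain ⟨hx0, hx1⟩ := hx
  have hlog : Real.log x < x - 1 := Real.log_lt_sub_one_of_pos hx0 (ne_of_lt hx1)
  have hg : (0:ℝ) < x - 1 - Real.log x := by linarith
  set E := Real.exp 1 with hE
  have hE0 : (0:ℝ) < E := Real.exp_pos 1
  have hEgt : (2.7:ℝ) < E := by
    have := Real.exp_one_gt_d9
    linarith
  set s := Real.sqrt x with hs
  have hs0 : 0 < s := Real.sqrt_pos.2 hx0
  have hsx : s^2 = x := Real.sq_sqrt hx0.le
  -- log t ≤ t / e for t = s⁻¹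
  have hle : Real.log s⁻¹ ≤ s⁻¹ / E := by
    have h1 : s⁻¹ / E ≤ Real.exp (s⁻¹ / E - 1) := by
      have := Real.add_one_le_exp (s⁻¹ / E - 1)
      linarith
    rw [Real.log_le_iff_le_exp (by positivity)]
    calc s⁻¹ = (s⁻¹ / E) * E := by field_simp
      _ ≤ Real.exp (s⁻¹ / E - 1) * Real.exp 1 :=
          mul_le_mul_of_nonneg_right h1 (Real.exp_pos 1).le
      _ = Real.exp (s⁻¹ / E) := by rw [← Real.exp_add]; norm_num
  have hlogs : Real.log x = 2 * Real.log s := by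
    rw [← hsx, Real.log_pow]; push_cast; ring
  have hlogsinv : Real.log s⁻¹ = - Real.log s := Real.log_inv s
  have hb : x - 1 - Real.log x ≤ 2 / (E * s) := by
    have h2 : - Real.log x ≤ 2 / (E * s) := by
      rw [hlogs]
      have : (2:ℝ) / (E * s) = 2 * (s⁻¹ / E) := by field_simp
      rw [this]
      nlinarith [hle, hlogsinv]
    linarith
  have hsq : (x - 1 - Real.log x)^2 ≤ (2 / (E * s))^2 :=
    pow_le_pow_left₀ hg.le hb 2
  have hmul : x * (x - 1 - Real.log x)^2 ≤ x * (2 / (E * s))^2 :=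
    mul_le_mul_of_nonneg_left hsq hx0.le
  have heq : x * (2 / (E * s))^2 = 4 / E^2 := by
    rw [← hsx]; field_simp; ring
  have hfinal : x * (x - 1 - Real.log x)^2 ≤ 8/9 := by
    rw [heq] at hmul
    have : (4:ℝ) / E^2 ≤ 8/9 := by
      rw [div_le_div_iff₀ (by positivity) (by norm_num)]
      nlinarith [hEgt]
    linarith
  exact ⟨by positivity, hfinal, lt_of_le_of_lt hfinal (by norm_num)⟩
end

section
/- For integers h ≥ 2 and real p ∈ (0,1) with h·p < 1, one has p·h·(h·(1−p)/(h−1))^{h−1} < 1. -/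
/-- For integers `h ≥ 2` and real `p ∈ (0,1)` with `h * p < 1`, one has
`p * h * (h * (1 - p) / (h - 1)) ^ (h - 1) < 1`. -/
theorem stmt_3 (h : ℕ) (hh : 2 ≤ h) (p : ℝ) (hp0 : 0 < p) (hp1 : p < 1)
    (hhp : (h : ℝ) * p < 1) :
    p * h * ((h * (1 - p) / ((h : ℝ) - 1)) ^ (h - 1)) < 1 := by
  have hr2 : (2:ℝ) ≤ (h:ℝ) := by exact_mod_cast hh
  have hone : 1 ≤ h := le_trans one_le_two hh
  have hcast : ((h - 1 : ℕ) : ℝ) = (h:ℝ) - 1 := by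
    push_cast [Nat.cast_sub hone]; ring
  set q : ℝ := (h:ℝ) * (1 - p) / ((h:ℝ) - 1) with hq
  have hden : (0:ℝ) < (h:ℝ) - 1 := by linarith
  have hq0 : 0 < q := div_pos (mul_pos (by linarith) (by linarith)) hden
  have hqe : q ≤ Real.exp (q - 1) := by
    have := Real.add_one_le_exp (q - 1); linarith
  have hpow : q ^ (h-1) ≤ Real.exp (q - 1) ^ (h-1) :=
    pow_le_pow_left₀ hq0.le hqe _
  have hA : (h:ℝ) * p < Real.exp ((h:ℝ) * p - 1) := by
    have := Real.add_one_lt_exp (x := (h:ℝ) * p - 1) (by intro hx; nlinarith)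
    linarith
  have hqpos : 0 < q ^ (h-1) := pow_pos hq0 _
  have hstep : (h:ℝ) * p * q ^ (h-1) < Real.exp ((h:ℝ)*p - 1) * Real.exp (q - 1) ^ (h-1) := by
    calc (h:ℝ) * p * q ^ (h-1) < Real.exp ((h:ℝ)*p - 1) * q ^ (h-1) :=
          mul_lt_mul_of_pos_right hA hqpos
      _ ≤ Real.exp ((h:ℝ)*p - 1) * Real.exp (q - 1) ^ (h-1) :=
          mul_le_mul_of_nonneg_left hpow (Real.exp_pos _).le
  have hqmul : ((h:ℝ) - 1) * q = (h:ℝ) * (1 - p) := by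
    rw [hq]; field_simp [hden.ne']
  have hsum : (h:ℝ)*p - 1 + ((h-1 : ℕ):ℝ) * (q - 1) = 0 := by
    rw [hcast]; nlinarith [hqmul]
  have hfinal : Real.exp ((h:ℝ)*p - 1) * Real.exp (q - 1) ^ (h-1) = 1 := by
    rw [← Real.exp_nat_mul, ← Real.exp_add, hsum, Real.exp_zero]
  have : p * (h:ℝ) * q ^ (h-1) < 1 := by
    rw [mul_comm p (h:ℝ)]; rw [hfinal] at hstep; exact hstep
  exact this
end

section
/- For every ν > 0 and every integer m ≥ 2, the series ∑_{k=1}^{∞} e^{−νk} k^{m−1} equals ν^{−m}(m−1)! + R_m where the remainder satisfies |R_m| ≤ 1/(π(m−1)) + 2(m−1)!/π^m. -/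
open Real MeasureTheory Set Filter

lemma aux_norm {z : ℂ} (n : ℕ) {t : ℝ} (ht : 0 < t) :
    ‖(t : ℂ) ^ n * Complex.exp (-(z * t))‖ = t ^ n * Real.exp (-(z.re * t)) := by
  rw [norm_mul, Complex.norm_exp]
  simp only [norm_pow, Complex.norm_real, Real.norm_eq_abs, abs_of_pos ht]
  rw [Complex.neg_re, Complex.mul_re, Complex.ofReal_re, Complex.ofReal_im, mul_zero, sub_zero]

lemma aux_integrable {z : ℂ} (hz : 0 < z.re) (n : ℕ) :
    IntegrableOn (fun t : ℝ => (t : ℂ) ^ n * Complex.exp (-(z * t))) (Ioi 0) := by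
  have h := integrableOn_rpow_mul_exp_neg_mul_rpow (p := 1) (s := (n : ℝ))
    (b := z.re) (lt_of_lt_of_le neg_one_lt_zero (Nat.cast_nonneg n)) one_pos hz
  apply MeasureTheory.Integrable.mono'
    (g := fun x : ℝ => x ^ (n : ℝ) * Real.exp (-z.re * x ^ (1:ℝ)))
  · exact h
  · exact ((Complex.continuous_ofReal.pow n).mul
      (Complex.continuous_exp.comp (by fun_prop))).aestronglyMeasurable
  · filter_upwards [ae_restrict_mem measurableSet_Ioi] with x hx
    rw [mem_Ioi] at hx
    rw [aux_norm n hx, Real.rpow_natCast, Real.rpow_one, neg_mul]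

lemma aux_tendsto {z : ℂ} (hz : 0 < z.re) (n : ℕ) :
    Tendsto (fun t : ℝ => (t : ℂ) ^ n * Complex.exp (-(z * t))) atTop (nhds 0) := by
  rw [tendsto_zero_iff_norm_tendsto_zero]
  have h2 : Tendsto (fun t : ℝ => t ^ n * Real.exp (-(z.re * t))) atTop (nhds 0) := by
    have h3 := (tendsto_pow_mul_exp_neg_atTop_nhds_zero n).comp
      (tendsto_id.const_mul_atTop hz (f := fun t : ℝ => t))
    have h4 := h3.const_mul ((z.re) ^ n)⁻¹
    rw [mul_zero] at h4
    refine h4.congr' ?_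
    filter_upwards [eventually_gt_atTop 0] with t ht
    simp only [Function.comp, id_eq, mul_pow]
    have : z.re ^ n ≠ 0 := by positivity
    field_simp
  refine h2.congr' ?_
  filter_upwards [eventually_gt_atTop 0] with t ht
  rw [aux_norm n ht]

lemma aux_integral {z : ℂ} (hz : 0 < z.re) : ∀ n : ℕ,
    ∫ t in Ioi (0:ℝ), (t : ℂ) ^ n * Complex.exp (-(z * t)) = n.factorial / z ^ (n + 1) := by
  have hz0 : z ≠ 0 := fun h => by simp [h] at hz
  have hder : ∀ t : ℝ, HasDerivAt (fun s : ℝ => Complex.exp (-(z * s)))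
      (-z * Complex.exp (-(z * t))) t := by
    intro t
    have h1 : HasDerivAt (fun w : ℂ => Complex.exp (-(z * w))) (-z * Complex.exp (-(z * t))) t := by
      have := (Complex.hasDerivAt_exp (-(z * t))).comp (t : ℂ)
        (((hasDerivAt_id (t : ℂ)).const_mul z).neg)
      simp [mul_comm] at this
      rw [neg_mul]
      exact this
    exact h1.comp_ofReal
  intro n
  induction n with
  | zero =>
    have := integral_Ioi_of_hasDerivAt_of_tendsto' (f := fun t : ℝ => -Complex.exp (-(z * t)) / z)
      (f' := fun t : ℝ => Complex.exp (-(z * t))) (a := 0) (m := 0)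
      (fun t _ => by
        have := ((hder t).neg).div_const z
        refine this.congr_deriv ?_
        field_simp)
      (by simpa using aux_integrable hz 0)
      (by
        have := ((aux_tendsto hz 0).neg).div_const z
        simpa using this)
    simp only [Complex.ofReal_zero, mul_zero, neg_zero, Complex.exp_zero, zero_sub, neg_neg,
      neg_div] at this
    simpa [Nat.factorial] using this
  | succ n ih =>
    have key := integral_Ioi_of_hasDerivAt_of_tendsto'
      (f := fun t : ℝ => (t : ℂ) ^ (n + 1) * Complex.exp (-(z * t)))
      (f' := fun t : ℝ => (n + 1 : ℂ) * ((t : ℂ) ^ n * Complex.exp (-(z * t)))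
        + (-z) * ((t : ℂ) ^ (n + 1) * Complex.exp (-(z * t)))) (a := 0) (m := 0)
      (fun t _ => by
        have hp : HasDerivAt (fun s : ℝ => (s : ℂ) ^ (n + 1)) ((n + 1 : ℂ) * (t : ℂ) ^ n) t := by
          have := (hasDerivAt_pow (n + 1) (t : ℂ)).comp_ofReal
          simpa using this
        have := hp.mul (hder t)
        refine this.congr_deriv ?_
        ring)
      (((aux_integrable hz n).const_mul _).add ((aux_integrable hz (n + 1)).const_mul _))
      (aux_tendsto hz (n + 1))
    rw [integral_add ((aux_integrable hz n).const_mul _) ((aux_integrable hz (n + 1)).const_mul _),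
      integral_const_mul, integral_const_mul, ih] at key
    simp only [Complex.ofReal_zero, mul_zero, neg_zero, Complex.exp_zero, mul_one,
      zero_pow (Nat.succ_ne_zero n), zero_sub, neg_zero, sub_zero] at key
    have key2 : (∫ t in Ioi (0:ℝ), (t : ℂ) ^ (n + 1) * Complex.exp (-(z * t)))
        = (n + 1 : ℂ) * (n.factorial / z ^ (n + 1)) / z := by
      rw [eq_div_iff hz0]
      linear_combination -key
    rw [key2, Nat.factorial_succ, mul_div_assoc, div_div, ← pow_succ]
    push_cast
    ring

open FourierTransform in
lemma aux_fourier {ν : ℝ} (hν : 0 < ν) {m : ℕ} (hm : 2 ≤ m) (ξ : ℝ) :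
    𝓕
      (fun x : ℝ => if x ≤ 0 then 0 else (x:ℂ)^(m-1) * Complex.exp (-(↑ν * ↑x))) ξ
      = (m-1).factorial / ((ν:ℂ) + 2*π*ξ*Complex.I)^m := by
  set z : ℂ := (ν:ℂ) + 2*π*ξ*Complex.I with hzdef
  have hzre : 0 < z.re := by simp [hzdef, Complex.add_re, Complex.mul_re, hν]
  rw [Real.fourier_real_eq_integral_exp_smul]
  have heq : (fun v : ℝ => Complex.exp (↑(-2*π*v*ξ) * Complex.I) •
      (if v ≤ 0 then 0 else (v:ℂ)^(m-1) * Complex.exp (-(↑ν * ↑v))))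
      = Set.indicator (Ioi 0) (fun v : ℝ => (v:ℂ)^(m-1) * Complex.exp (-(z * v))) := by
    funext v
    by_cases hv : v ≤ 0
    · rw [if_pos hv, Set.indicator_of_notMem (by simpa using hv), smul_zero]
    · push_neg at hv
      rw [if_neg (not_le.mpr hv), Set.indicator_of_mem (mem_Ioi.mpr hv), smul_eq_mul,
        mul_comm, mul_assoc, ← Complex.exp_add]
      congr 1
      rw [hzdef]
      push_cast
      ring
  rw [heq, integral_indicator measurableSet_Ioi]
  have := aux_integral hzre (m - 1)
  rwa [Nat.sub_add_cancel (le_trans one_le_two hm)] at this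

set_option maxHeartbeats 2000000 in
open FourierTransform in
/-- For every `ν > 0` and integer `m ≥ 2`, `∑_{k=1}^∞ e^{-νk} k^{m-1} = ν^{-m} (m-1)! + R_m`
where `|R_m| ≤ 1/(π(m-1)) + 2(m-1)!/π^m`. -/
theorem stmt_8 (ν : ℝ) (hν : 0 < ν) (m : ℕ) (hm : 2 ≤ m) :
    ∃ R : ℝ,
      (∑' k : ℕ, Real.exp (-ν * (k + 1)) * ((k : ℝ) + 1) ^ (m - 1))
        = (Nat.factorial (m - 1) : ℝ) / ν ^ m + R ∧
      |R| ≤ 1 / (π * (m - 1 : ℝ)) + 2 * (Nat.factorial (m - 1) : ℝ) / π ^ m := by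
  have hm1 : 1 ≤ m - 1 := by omega
  have hm10 : m - 1 ≠ 0 := by omega
  set g : ℝ → ℂ := fun x => (x:ℂ)^(m-1) * Complex.exp (-(↑ν * ↑x)) with hgdef
  set f : ℝ → ℂ := fun x => if x ≤ 0 then 0 else g x with hfdef
  set S : ℝ := ∑' k : ℕ, Real.exp (-ν * (k + 1)) * ((k : ℝ) + 1) ^ (m - 1) with hSdef
  set C : ℝ := (m-1).factorial * ((2*π)^m)⁻¹ with hCdef
  have hπ : 0 < π := Real.pi_pos
  have hC : 0 ≤ C := by positivity
  -- continuity
  have hc : Continuous f := by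
    rw [hfdef]
    refine Continuous.if_le continuous_const ?_ continuous_id continuous_const ?_
    · exact (Complex.continuous_ofReal.pow _).mul (Complex.continuous_exp.comp (by fun_prop))
    · intro x hx
      rw [hgdef]
      simp [hx, zero_pow hm10]
  -- Fourier values
  have hF : ∀ ξ : ℝ, 𝓕 f ξ = (m-1).factorial / ((ν:ℂ) + 2*π*ξ*Complex.I)^m :=
    fun ξ => aux_fourier hν hm ξ
  -- bound on Fourier values
  have hbound : ∀ ξ : ℝ, 1 ≤ |ξ| → ‖𝓕 f ξ‖ ≤ C * (|ξ|^2)⁻¹ := by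
    intro ξ hξ
    rw [hF ξ, norm_div, norm_pow]
    have him : 2*π*|ξ| ≤ ‖(ν:ℂ) + 2*π*ξ*Complex.I‖ := by
      have h1 := Complex.abs_im_le_norm ((ν:ℂ) + 2*π*ξ*Complex.I)
      have h2 : ((ν:ℂ) + 2*π*ξ*Complex.I).im = 2*π*ξ := by
        simp [Complex.add_im, Complex.mul_im]
      rw [h2] at h1
      calc 2*π*|ξ| = |2*π*ξ| := by
            rw [abs_mul, abs_of_pos (by positivity : (0:ℝ) < 2*π)]
        _ ≤ _ := h1
    have hξ0 : (0:ℝ) < |ξ| := lt_of_lt_of_le one_pos hξ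
    have hden : (2*π)^m * |ξ|^2 ≤ ‖(ν:ℂ) + 2*π*ξ*Complex.I‖^m := by
      calc (2*π)^m * |ξ|^2 ≤ (2*π)^m * |ξ|^m := by
            refine mul_le_mul_of_nonneg_left (pow_le_pow_right₀ hξ hm) (by positivity)
        _ = (2*π*|ξ|)^m := by rw [mul_pow]; ring
        _ ≤ _ := pow_le_pow_left₀ (by positivity) him m
    have hnorm : ‖((m-1).factorial : ℂ)‖ = ((m-1).factorial : ℝ) := by
      simp
    rw [hnorm, hCdef]
    calc ((m-1).factorial : ℝ) / ‖(ν:ℂ) + 2*π*ξ*Complex.I‖^m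
        ≤ ((m-1).factorial : ℝ) / ((2*π)^m * |ξ|^2) := by
          gcongr
      _ = ((m-1).factorial : ℝ) * ((2*π)^m)⁻¹ * (|ξ|^2)⁻¹ := by
          rw [div_eq_mul_inv, mul_inv, ← mul_assoc]
  -- Basel-type bound
  have basel : HasSum (fun n : ℕ => (((n:ℝ)+1)^2)⁻¹) (π^2/6) := by
    have h0 := (hasSum_nat_add_iff' (f := fun n : ℕ => 1/(n:ℝ)^2) 1).mpr hasSum_zeta_two
    simp only [Finset.range_one, Finset.sum_singleton, Nat.cast_zero] at h0
    have h1 : (fun n : ℕ => (((n:ℝ)+1)^2)⁻¹) = (fun n : ℕ => 1/(((n+1:ℕ)):ℝ)^2) := by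
      funext n
      push_cast
      rw [one_div]
    rw [h1]
    convert h0 using 1
    · rfl
    · norm_num
  have hgsum : Summable (fun k : ℕ => C * (((k:ℝ)+1)^2)⁻¹) := (basel.summable).mul_left C
  have hgtsum : ∑' k : ℕ, C * (((k:ℝ)+1)^2)⁻¹ = C * (π^2/6) := by
    rw [tsum_mul_left, basel.tsum_eq]
  -- norm bounds on the two halves
  have hb1 : ∀ k : ℕ, ‖𝓕 f (((k:ℤ)+1 : ℤ) : ℝ)‖ ≤ C * (((k:ℝ)+1)^2)⁻¹ := by
    intro k
    have := hbound ((k:ℝ)+1) (by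
      rw [abs_of_pos (by positivity)]; linarith [Nat.cast_nonneg (α := ℝ) k])
    rw [abs_of_pos (by positivity : (0:ℝ) < (k:ℝ)+1)] at this
    convert this using 3 <;> push_cast <;> ring
  have hb2 : ∀ k : ℕ, ‖𝓕 f ((-((k:ℤ)+1) : ℤ) : ℝ)‖ ≤ C * (((k:ℝ)+1)^2)⁻¹ := by
    intro k
    have habs : |(((-((k:ℤ)+1) : ℤ)) : ℝ)| = (k:ℝ)+1 := by
      push_cast
      rw [abs_neg, abs_of_pos (by positivity)]
    have := hbound (((-((k:ℤ)+1) : ℤ)) : ℝ) (by rw [habs]; linarith [Nat.cast_nonneg (α := ℝ) k])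
    rwa [habs] at this
  have hns1 : Summable (fun k : ℕ => ‖𝓕 f (((k:ℤ)+1 : ℤ) : ℝ)‖) :=
    Summable.of_nonneg_of_le (fun k => norm_nonneg _) hb1 hgsum
  have hns2 : Summable (fun k : ℕ => ‖𝓕 f ((-((k:ℤ)+1) : ℤ) : ℝ)‖) :=
    Summable.of_nonneg_of_le (fun k => norm_nonneg _) hb2 hgsum
  have hs1 : Summable (fun k : ℕ => 𝓕 f (((k:ℤ)+1 : ℤ) : ℝ)) := hns1.of_norm
  have hs2 : Summable (fun k : ℕ => 𝓕 f ((-((k:ℤ)+1) : ℤ) : ℝ)) := hns2.of_norm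
  have hsum : Summable (fun n : ℤ => 𝓕 f (n : ℝ)) :=
    Summable.of_add_one_of_neg_add_one (by exact_mod_cast hs1) (by exact_mod_cast hs2)
  -- decay of f
  have hdecay : f =O[Filter.cocompact ℝ] (fun x : ℝ => |x| ^ (-2 : ℝ)) := by
    rw [cocompact_eq_atBot_atTop, Asymptotics.isBigO_sup]
    constructor
    · refine Asymptotics.IsBigO.of_bound 1 ?_
      filter_upwards [Filter.eventually_le_atBot (0:ℝ)] with x hx
      rw [hfdef]
      simp only [if_pos hx, norm_zero]
      positivity
    · refine Asymptotics.IsBigO.of_bound 1 ?_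
      have htd : Filter.Tendsto (fun x : ℝ => (x:ℂ)^(m+1) * Complex.exp (-((ν:ℂ) * x)))
          Filter.atTop (nhds 0) := aux_tendsto (by simp [hν]) (m+1)
      rw [tendsto_zero_iff_norm_tendsto_zero] at htd
      filter_upwards [htd.eventually (eventually_le_nhds (by norm_num : (0:ℝ) < 1)),
        Filter.eventually_ge_atTop (1:ℝ)] with x hx1 hx2
      have hx0 : (0:ℝ) < x := lt_of_lt_of_le one_pos hx2
      rw [hfdef]
      simp only [if_neg (not_le.mpr hx0)]
      rw [hgdef]
      have hn1 : ‖(x:ℂ)^(m-1) * Complex.exp (-(↑ν * ↑x))‖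
          = x^(m-1) * Real.exp (-(((ν:ℂ)).re * x)) := aux_norm (m-1) hx0
      have hn2 : ‖(x:ℂ)^(m+1) * Complex.exp (-((ν:ℂ) * x))‖
          = x^(m+1) * Real.exp (-(((ν:ℂ)).re * x)) := aux_norm (m+1) hx0
      rw [hn2] at hx1
      rw [hn1]
      have hxrw : |x| ^ (-2:ℝ) = (x^2)⁻¹ := by
        rw [abs_of_pos hx0, show ((-2:ℝ)) = -((2:ℕ):ℝ) by norm_num, Real.rpow_neg hx0.le,
          Real.rpow_natCast]
      rw [one_mul, Real.norm_eq_abs, hxrw, abs_of_pos (by positivity)]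
      have h5 : x^(m-1) * Real.exp (-((ν:ℂ).re * x)) * x^2 ≤ 1 := by
        calc x^(m-1) * Real.exp (-((ν:ℂ).re * x)) * x^2
            = x^(m+1) * Real.exp (-((ν:ℂ).re * x)) := by
              rw [mul_right_comm, ← pow_add]
              congr 2
              omega
          _ ≤ 1 := hx1
      calc x^(m-1) * Real.exp (-((ν:ℂ).re * x))
          = (x^(m-1) * Real.exp (-((ν:ℂ).re * x)) * x^2) * (x^2)⁻¹ := by field_simp
        _ ≤ 1 * (x^2)⁻¹ := mul_le_mul_of_nonneg_right h5 (by positivity)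
        _ = (x^2)⁻¹ := one_mul _
  -- Poisson summation
  have key := Real.tsum_eq_tsum_fourier_of_rpow_decay_of_summable hc one_lt_two hdecay
    hsum 0
  simp only [zero_add, QuotientAddGroup.mk_zero, fourier_eval_zero, mul_one] at key
  -- summability of the real series
  have hSsum : Summable (fun k : ℕ => Real.exp (-ν * (k + 1)) * ((k : ℝ) + 1) ^ (m - 1)) := by
    have hgeo : Summable (fun n : ℕ => (n:ℝ)^(m-1) * (Real.exp (-ν))^n) :=
      summable_pow_mul_geometric_of_norm_lt_one (m-1)
        (by rw [Real.norm_eq_abs, abs_of_pos (Real.exp_pos _)]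
            exact Real.exp_lt_one_iff.mpr (by linarith))
    have h1 := (summable_nat_add_iff (f := fun n : ℕ => (n:ℝ)^(m-1) * (Real.exp (-ν))^n) 1).mpr hgeo
    refine h1.congr ?_
    intro k
    rw [← Real.exp_nat_mul]
    push_cast
    rw [mul_comm ((k:ℝ)+1) (-ν)]
    ring_nf
  -- values of f at integer points
  have hf1 : ∀ k : ℕ, f ((((k:ℤ)+1) : ℤ) : ℝ)
      = ((Real.exp (-ν * (k + 1)) * ((k : ℝ) + 1) ^ (m - 1) : ℝ) : ℂ) := by
    intro k
    have hpos : (0:ℝ) < (((k:ℤ)+1 : ℤ) : ℝ) := by push_cast; positivity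
    rw [hfdef]
    simp only [if_neg (not_le.mpr hpos)]
    rw [hgdef]
    push_cast
    ring
  have hf2 : ∀ k : ℕ, f (((-((k:ℤ)+1)) : ℤ) : ℝ) = 0 := by
    intro k
    have hneg : ((((-((k:ℤ)+1)) : ℤ)) : ℝ) ≤ 0 := by
      push_cast
      linarith [Nat.cast_nonneg (α := ℝ) k]
    rw [hfdef]
    simp only [if_pos hneg]
  have hf0 : f (((0:ℤ)) : ℝ) = 0 := by rw [hfdef]; simp
  -- LHS of Poisson
  have hlsum1 : Summable (fun k : ℕ => f ((((k:ℤ)+1) : ℤ) : ℝ)) :=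
    Summable.congr ((Complex.summable_ofReal).mpr hSsum) (fun k => (hf1 k).symm)
  have hlsum2 : Summable (fun k : ℕ => f (((-((k:ℤ)+1)) : ℤ) : ℝ)) :=
    Summable.congr summable_zero (fun k => (hf2 k).symm)
  have hlhs : ∑' n : ℤ, f (n : ℝ) = (S : ℂ) := by
    rw [tsum_of_add_one_of_neg_add_one (f := fun n : ℤ => f (n : ℝ)) hlsum1 hlsum2]
    rw [tsum_congr hf1, tsum_congr hf2, tsum_zero, hf0, add_zero, add_zero]
    rw [← Complex.ofReal_tsum]
  -- RHS of Poisson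
  have hF0 : 𝓕 f (((0:ℤ)) : ℝ) = ((((m-1).factorial : ℝ) / ν ^ m : ℝ) : ℂ) := by
    rw [Int.cast_zero, hF 0]
    push_cast
    norm_num
  set Rc : ℂ := (∑' k : ℕ, 𝓕 f (((k:ℤ)+1 : ℤ) : ℝ)) + ∑' k : ℕ, 𝓕 f ((-((k:ℤ)+1) : ℤ) : ℝ)
    with hRcdef
  have hdecomp : ∑' n : ℤ, 𝓕 f (n : ℝ) = (∑' k : ℕ, 𝓕 f (((k:ℤ)+1 : ℤ) : ℝ))
      + 𝓕 f (((0:ℤ)) : ℝ) + ∑' k : ℕ, 𝓕 f ((-((k:ℤ)+1) : ℤ) : ℝ) :=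
    tsum_of_add_one_of_neg_add_one hs1 hs2
  have hrhs : ∑' n : ℤ, 𝓕 f (n : ℝ) = ((((m-1).factorial : ℝ) / ν ^ m : ℝ) : ℂ) + Rc := by
    rw [hdecomp, hF0, hRcdef]
    ring
  -- conclude
  refine ⟨S - ((m-1).factorial : ℝ) / ν ^ m, by push_cast; ring, ?_⟩
  have hkey2 : (S : ℂ) = ((((m-1).factorial : ℝ) / ν ^ m : ℝ) : ℂ) + Rc := by
    rw [← hlhs, key, hrhs]
  have hR : ((S - ((m-1).factorial : ℝ) / ν ^ m : ℝ) : ℂ) = Rc := by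
    push_cast
    push_cast at hkey2
    linear_combination hkey2
  have hRabs : |S - ((m-1).factorial : ℝ) / ν ^ m| = ‖Rc‖ := by
    rw [← hR, Complex.norm_real, Real.norm_eq_abs]
  rw [hRabs]
  have hRb : ‖Rc‖ ≤ 2 * (C * (π^2/6)) := by
    rw [hRcdef]
    refine le_trans (norm_add_le _ _) ?_
    have t1 := norm_tsum_le_tsum_norm hns1
    have t2 := norm_tsum_le_tsum_norm hns2
    have u1 := Summable.tsum_le_tsum hb1 hns1 hgsum
    have u2 := Summable.tsum_le_tsum hb2 hns2 hgsum
    linarith [hgtsum]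
  refine le_trans hRb ?_
  have hfirst : 0 ≤ 1 / (π * (m - 1 : ℝ)) := by
    have h2 : (2:ℝ) ≤ (m:ℝ) := by exact_mod_cast hm
    have h1 : (1:ℝ) ≤ (m - 1 : ℝ) := by linarith
    positivity
  have hmain : 2 * (C * (π^2/6)) ≤ 2 * ((m-1).factorial : ℝ) / π ^ m := by
    rw [hCdef, mul_pow]
    have h2m : (4:ℝ) ≤ 2^m := by
      calc (4:ℝ) = 2^2 := by norm_num
      _ ≤ 2^m := pow_le_pow_right₀ one_le_two hm
    rw [div_eq_mul_inv]
    have hkey : π^2/6 * ((2:ℝ)^m)⁻¹ ≤ 1 := by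
      rw [div_mul_eq_mul_div, div_le_one (by norm_num)]
      calc π^2 * ((2:ℝ)^m)⁻¹ ≤ 16 * ((2:ℝ)^m)⁻¹ := by
            refine mul_le_mul_of_nonneg_right ?_ (by positivity)
            nlinarith [Real.pi_le_four, Real.pi_pos]
        _ ≤ 16 * (4:ℝ)⁻¹ := by
            refine mul_le_mul_of_nonneg_left ?_ (by norm_num)
            exact inv_anti₀ (by norm_num) h2m
        _ ≤ 6 := by norm_num
    calc 2 * ((m-1).factorial * ((2:ℝ)^m * π^m)⁻¹ * (π^2/6))
        = 2 * (m-1).factorial * (π^m)⁻¹ * (π^2/6 * ((2:ℝ)^m)⁻¹) := by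
          rw [mul_inv]; ring
      _ ≤ 2 * (m-1).factorial * (π^m)⁻¹ * 1 := by
          refine mul_le_mul_of_nonneg_left hkey (by positivity)
      _ = 2 * ((m-1).factorial : ℝ) * (π^m)⁻¹ := by ring
  linarith [hfirst, hmain]
end

section
/- For all integers k ≥ 2 and h ≥ 2, the binomial coefficient C(kh, k−1) satisfies C(kh, k−1) ≤ (e^{1/600}/(h−1)) · (1/√(2π(k−1))) · √(1 + 1/(h−1)) · (h^h/(h−1)^{h−1})^k. -/
open Real Filter Stirling

set_option maxHeartbeats 1000000


lemma sqrt_pi_le_stirlingSeq (n : ℕ) (hn : 1 ≤ n) : Real.sqrt π ≤ stirlingSeq n := by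
  obtain ⟨m, rfl⟩ := Nat.exists_eq_add_of_le hn
  have h1 : Filter.Tendsto (stirlingSeq ∘ Nat.succ) atTop (nhds (Real.sqrt π)) :=
    tendsto_stirlingSeq_sqrt_pi.comp (tendsto_add_atTop_nat 1)
  have := stirlingSeq'_antitone.le_of_tendsto h1 m
  simpa [Nat.succ_eq_add_one, Nat.add_comm] using this

lemma factorial_lower (n : ℕ) :
    Real.sqrt π * (Real.sqrt (2*n) * ((n:ℝ)/Real.exp 1)^n) ≤ (Nat.factorial n : ℝ) := by
  rcases Nat.eq_zero_or_pos n with rfl | hn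
  · simp
  have hd : 0 < Real.sqrt (2*n) * ((n:ℝ)/Real.exp 1)^n := by
    have : (0:ℝ) < n := by exact_mod_cast hn
    positivity
  have h := sqrt_pi_le_stirlingSeq n hn
  rw [stirlingSeq, le_div_iff₀ hd] at h
  linarith [h]

lemma log_stirling_upper (n : ℕ) (hn : 1 ≤ n) :
    Real.log (stirlingSeq n) ≤ Real.log (Real.sqrt π) + 1/(4*(n:ℝ)-2) := by
  have key : ∀ N : ℕ, Real.log (stirlingSeq n) - (1/(4*(n:ℝ)-2) - 1/(4*((n+N:ℕ):ℝ)-2))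
      ≤ Real.log (stirlingSeq (n + N)) := by
    intro N
    induction N with
    | zero => simp
    | succ N ih =>
      have hm : 1 ≤ n + N := le_trans hn (Nat.le_add_right _ _)
      obtain ⟨j, hj⟩ := Nat.exists_eq_add_of_le hm
      have hstep := log_stirlingSeq_sub_log_stirlingSeq_succ (j + 1)
      rw [show j + 1 + 1 = n + (N+1) by omega, show j + 1 = n + N by omega] at hstep
      have hc : (1:ℝ) ≤ ((n:ℝ) + N) := by exact_mod_cast hm
      have harith : 1 / (4 * (↑(n + N):ℝ) ^ 2) ≤ 1/(4*((↑(n+N):ℕ):ℝ)-2) - 1/(4*((↑(n+(N+1)):ℕ):ℝ)-2) := by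
        push_cast
        rw [div_sub_div _ _ (by nlinarith) (by nlinarith)]
        rw [div_le_div_iff₀ (by nlinarith) (by nlinarith)]
        nlinarith [sq_nonneg ((n:ℝ)+N)]
      have hstep' : Real.log (stirlingSeq (n+N)) - Real.log (stirlingSeq (n+(N+1)))
          ≤ 1/(4*((↑(n+N):ℕ):ℝ)-2) - 1/(4*((↑(n+(N+1)):ℕ):ℝ)-2) := le_trans hstep harith
      push_cast at ih hstep' ⊢
      linarith
  have hA : Tendsto (fun N : ℕ => 4*((n+N:ℕ):ℝ)-2) atTop atTop := by
    apply tendsto_atTop_add_const_right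
    have h1 : Tendsto (fun N : ℕ => ((n+N:ℕ):ℝ)) atTop atTop := by
      apply tendsto_natCast_atTop_atTop.comp
      exact ((tendsto_add_atTop_nat n).congr (fun a => Nat.add_comm a n))
    exact h1.const_mul_atTop (by norm_num)
  have h0 : Tendsto (fun N : ℕ => 1/(4*((n+N:ℕ):ℝ)-2)) atTop (nhds 0) := by
    simp only [one_div]; exact hA.inv_tendsto_atTop
  have hlim1 : Tendsto (fun N : ℕ => Real.log (stirlingSeq n) - (1/(4*(n:ℝ)-2) - 1/(4*((n+N:ℕ):ℝ)-2)))
      atTop (nhds (Real.log (stirlingSeq n) - 1/(4*(n:ℝ)-2))) := by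
    have := (tendsto_const_nhds (x := Real.log (stirlingSeq n) - 1/(4*(n:ℝ)-2)) (f := atTop (α := ℕ))).add h0
    simpa using this.congr (fun N => by push_cast; ring)
  have hlim2 : Tendsto (fun N : ℕ => Real.log (stirlingSeq (n + N))) atTop (nhds (Real.log (Real.sqrt π))) := by
    have h2 : Tendsto (fun N : ℕ => stirlingSeq (n + N)) atTop (nhds (Real.sqrt π)) := by
      have := tendsto_stirlingSeq_sqrt_pi.comp (tendsto_add_atTop_nat n)
      exact this.congr (fun a => by simp [Function.comp, Nat.add_comm])
    exact ((Real.continuousAt_log (by positivity)).tendsto.comp h2)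
  have := le_of_tendsto_of_tendsto' hlim1 hlim2 key
  linarith

lemma factorial_upper (n : ℕ) (hn : 1 ≤ n) :
    (Nat.factorial n : ℝ) ≤ Real.sqrt π * Real.exp (1/(4*(n:ℝ)-2)) * (Real.sqrt (2*n) * ((n:ℝ)/Real.exp 1)^n) := by
  have hpos : 0 < stirlingSeq n := by
    obtain ⟨m, rfl⟩ := Nat.exists_eq_add_of_le hn
    rw [Nat.add_comm]; exact stirlingSeq'_pos m
  have h := log_stirling_upper n hn
  have h2 : stirlingSeq n ≤ Real.sqrt π * Real.exp (1/(4*(n:ℝ)-2)) := by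
    have h3 := Real.exp_le_exp.mpr h
    rw [Real.exp_log hpos, Real.exp_add, Real.exp_log (by positivity)] at h3
    exact h3
  have hd : 0 < Real.sqrt (2*n) * ((n:ℝ)/Real.exp 1)^n := by
    have h4 : (0:ℝ) < n := by exact_mod_cast hn
    positivity
  rw [stirlingSeq, div_le_iff₀ hd] at h2
  linarith

/-- For integers `k ≥ 2`, `h ≥ 2`, the binomial coefficient `C(kh, k-1)` satisfies
`C(kh, k-1) ≤ (e^{1/600}/(h-1)) (1/√(2π(k-1))) √(1 + 1/(h-1)) (h^h/(h-1)^{h-1})^k`. -/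
theorem stmt_12 (k h : ℕ) (hk : 2 ≤ k) (hh : 2 ≤ h) :
    (Nat.choose (k * h) (k - 1) : ℝ)
      ≤ (Real.exp (1 / 600) / ((h : ℝ) - 1)) * (1 / Real.sqrt (2 * π * ((k : ℝ) - 1)))
          * Real.sqrt (1 + 1 / ((h : ℝ) - 1))
          * ((h : ℝ) ^ h / ((h : ℝ) - 1) ^ (h - 1)) ^ k := by
  obtain ⟨a, rfl⟩ : ∃ a, k = a + 2 := ⟨k - 2, by omega⟩
  obtain ⟨b, rfl⟩ : ∃ b, h = b + 2 := ⟨h - 2, by omega⟩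
  clear hk hh
  have hXa : (0:ℝ) ≤ (a:ℝ) := Nat.cast_nonneg a
  have hYb : (0:ℝ) ≤ (b:ℝ) := Nat.cast_nonneg b
  -- natural number quantities
  set nn : ℕ := (a+2)*(b+2) with hnn
  set kk : ℕ := a+1 with hkk
  set MM : ℕ := (a+2)*(b+1) with hMM
  set mm : ℕ := MM+1 with hmm
  have hsub : nn - kk = mm := Nat.sub_eq_of_eq_add (by rw [hnn, hmm, hMM, hkk]; ring)
  have hkle : kk ≤ nn := by
    have h1 : (a+2) ≤ (a+2)*(b+2) := Nat.le_mul_of_pos_right _ (by omega)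
    rw [hkk, hnn]; omega
  -- real atoms
  set A : ℝ := (a:ℝ)+2 with hA
  set B : ℝ := (b:ℝ)+2 with hB
  set C : ℝ := (b:ℝ)+1 with hC
  set D : ℝ := (a:ℝ)+1 with hD
  set G : ℝ := A*C+1 with hG
  set u : ℝ := 1/(4*(A*B)-2) with hu
  have hApos : (0:ℝ) < A := by rw [hA]; positivity
  have hBpos : (0:ℝ) < B := by rw [hB]; positivity
  have hCpos : (0:ℝ) < C := by rw [hC]; positivity
  have hDpos : (0:ℝ) < D := by rw [hD]; positivity
  have hSpos : (0:ℝ) < A*C := mul_pos hApos hCpos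
  have hGpos : (0:ℝ) < G := by rw [hG]; positivity
  have hABpos : (0:ℝ) < A*B := mul_pos hApos hBpos
  have hBC : B = C + 1 := by rw [hB, hC]; ring
  have hAD : A = D + 1 := by rw [hA, hD]; ring
  have hPR : 2*G ≤ 4*(A*B) - 2 := by
    rw [hG, hA, hB, hC]; nlinarith [mul_nonneg hXa hYb]
  have h4P : (0:ℝ) < 4*(A*B)-2 := by rw [hA, hB]; nlinarith [mul_nonneg hXa hYb]
  -- cast equalities
  have hPc : ((nn:ℕ):ℝ) = A*B := by rw [hnn, hA, hB]; push_cast; ring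
  have hQc : ((kk:ℕ):ℝ) = D := by rw [hkk, hD]; push_cast; ring
  have hRc : ((mm:ℕ):ℝ) = G := by rw [hmm, hMM, hG, hA, hC]; push_cast; ring
  have hSc : ((MM:ℕ):ℝ) = A*C := by rw [hMM, hA, hC]; push_cast; ring
  -- goal normalization
  have hg3 : (b+2) - 1 = b+1 := rfl
  have hg1 : (a+2) - 1 = kk := rfl
  rw [hg3, hg1]
  have hcastB : ((b+2 : ℕ):ℝ) = B := by rw [hB]; push_cast; ring
  have hcastA : ((a+2 : ℕ):ℝ) = A := by rw [hA]; push_cast; ring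
  rw [hcastB, hcastA, show B - 1 = C by rw [hB, hC]; ring, show A - 1 = D by rw [hA, hD]; ring]
  clear_value u G D C B A
  set Bk : ℝ := (B^(b+2)/C^(b+1))^(a+2) with hBk
  have hBkpos : 0 < Bk := by
    rw [hBk]; exact pow_pos (div_pos (pow_pos hBpos _) (pow_pos hCpos _)) _
  -- choose as factorials
  rw [Nat.cast_choose ℝ hkle, hsub]
  -- positivity facts
  have hs2AB : (0:ℝ) < Real.sqrt (2*(A*B)) := Real.sqrt_pos.mpr (by linarith)
  have hs2D : (0:ℝ) < Real.sqrt (2*D) := Real.sqrt_pos.mpr (by linarith)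
  have hs2G : (0:ℝ) < Real.sqrt (2*G) := Real.sqrt_pos.mpr (by linarith)
  have hspi : (0:ℝ) < Real.sqrt π := Real.sqrt_pos.mpr pi_pos
  have hsqpi : Real.sqrt π ≠ 0 := ne_of_gt hspi
  have hsqQ : Real.sqrt (2*D) ≠ 0 := ne_of_gt hs2D
  have hsqR : Real.sqrt (2*G) ≠ 0 := ne_of_gt hs2G
  have he : Real.exp 1 ≠ 0 := Real.exp_ne_zero 1
  have hDne : D ≠ 0 := ne_of_gt hDpos
  have hGne : G ≠ 0 := ne_of_gt hGpos
  have hCne : C ≠ 0 := ne_of_gt hCpos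
  have hAne : A ≠ 0 := ne_of_gt hApos
  have hDkGm : (0:ℝ) < D^kk * G^mm := mul_pos (pow_pos hDpos _) (pow_pos hGpos _)
  -- factorial bounds
  have hNum : (Nat.factorial nn : ℝ) ≤ Real.sqrt π * Real.exp u * (Real.sqrt (2*(A*B)) * ((A*B)/Real.exp 1)^nn) := by
    have h5 := factorial_upper nn (Nat.one_le_iff_ne_zero.mpr (by rw [hnn]; exact Nat.mul_ne_zero (by omega) (by omega)))
    rw [hPc] at h5
    rw [hu]; exact h5
  have hD1 : Real.sqrt π * (Real.sqrt (2*D) * (D/Real.exp 1)^kk) ≤ (Nat.factorial kk : ℝ) := by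
    have h5 := factorial_lower kk; rw [hQc] at h5; exact h5
  have hD2 : Real.sqrt π * (Real.sqrt (2*G) * (G/Real.exp 1)^mm) ≤ (Nat.factorial mm : ℝ) := by
    have h5 := factorial_lower mm; rw [hRc] at h5; exact h5
  have hD1pos : 0 < Real.sqrt π * (Real.sqrt (2*D) * (D/Real.exp 1)^kk) :=
    mul_pos hspi (mul_pos hs2D (pow_pos (div_pos hDpos (Real.exp_pos 1)) _))
  have hD2pos : 0 < Real.sqrt π * (Real.sqrt (2*G) * (G/Real.exp 1)^mm) :=
    mul_pos hspi (mul_pos hs2G (pow_pos (div_pos hGpos (Real.exp_pos 1)) _))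
  have step1 : (Nat.factorial nn : ℝ) / ((Nat.factorial kk : ℝ) * (Nat.factorial mm : ℝ))
      ≤ (Real.sqrt π * Real.exp u * (Real.sqrt (2*(A*B)) * ((A*B)/Real.exp 1)^nn)) /
        ((Real.sqrt π * (Real.sqrt (2*D) * (D/Real.exp 1)^kk)) * (Real.sqrt π * (Real.sqrt (2*G) * (G/Real.exp 1)^mm))) := by
    apply div_le_div₀ (le_of_lt (mul_pos (mul_pos hspi (Real.exp_pos u))
      (mul_pos hs2AB (pow_pos (div_pos hABpos (Real.exp_pos 1)) _)))) hNum
      (mul_pos hD1pos hD2pos)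
    exact mul_le_mul hD1 hD2 (le_of_lt hD2pos) (le_of_lt (lt_of_lt_of_le hD1pos hD1))
  have abstract : ∀ (sp s2p s2q s2r eu pn qk rm : ℝ), sp ≠ 0 → s2q ≠ 0 → s2r ≠ 0 → qk ≠ 0 → rm ≠ 0 →
      (sp * eu * (s2p * pn)) / ((sp*(s2q*qk)) * (sp*(s2r*rm)))
        = (eu/sp) * (s2p/(s2q*s2r)) * (pn/(qk*rm)) := by
    intro sp s2p s2q s2r eu pn qk rm h1 h2 h3 h4 h5
    field_simp
  have ident2 : ((A*B)/Real.exp 1)^nn / ((D/Real.exp 1)^kk * (G/Real.exp 1)^mm)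
      = (A*B)^nn/(D^kk * G^mm) := by
    have hgen : ∀ (Aq Dq Eq : ℝ), Eq ≠ 0 → Dq ≠ 0 → (Aq/Eq)/(Dq/Eq) = Aq/Dq := by
      intro Aq Dq Eq hE hDq; field_simp
    rw [div_pow, div_pow, div_pow, div_mul_div_comm, ← pow_add,
      show kk + mm = nn by rw [hnn, hkk, hmm, hMM]; ring]
    exact hgen _ _ _ (pow_ne_zero _ he) (ne_of_gt hDkGm)
  have ident3 : (A*B)^nn/(D^kk * G^mm)
      = ((A * (A/D)^kk * ((A*C)/G)^MM / G) * Bk) := by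
    rw [div_eq_iff (ne_of_gt hDkGm), hBk, div_pow, div_pow, div_pow]
    rw [hnn, hkk, hmm, hMM]
    field_simp
    ring
  have ident : (Real.sqrt π * Real.exp u * (Real.sqrt (2*(A*B)) * ((A*B)/Real.exp 1)^nn)) /
        ((Real.sqrt π * (Real.sqrt (2*D) * (D/Real.exp 1)^kk)) * (Real.sqrt π * (Real.sqrt (2*G) * (G/Real.exp 1)^mm)))
      = (Real.exp u / Real.sqrt π) * (Real.sqrt (2*(A*B)) / (Real.sqrt (2*D) * Real.sqrt (2*G)))
        * ((A * (A/D)^kk * ((A*C)/G)^MM / G) * Bk) := by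
    rw [abstract _ _ _ _ _ _ _ _ hsqpi hsqQ hsqR (ne_of_gt (pow_pos (div_pos hDpos (Real.exp_pos 1)) _))
      (ne_of_gt (pow_pos (div_pos hGpos (Real.exp_pos 1)) _))]
    rw [ident2, ident3]
  rw [ident] at step1
  -- pointwise exponential bounds
  have hE1 : (A/D)^kk ≤ Real.exp 1 := by
    have hpt : A/D ≤ Real.exp (1/D) := by
      have h1 := Real.add_one_le_exp (1/D)
      have heq : A/D = 1/D + 1 := by rw [hAD]; field_simp; ring
      rw [heq]; exact h1
    calc (A/D)^kk ≤ (Real.exp (1/D))^kk :=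
          pow_le_pow_left₀ (le_of_lt (div_pos hApos hDpos)) hpt kk
      _ = Real.exp ((kk:ℝ) * (1/D)) := (Real.exp_nat_mul _ kk).symm
      _ = Real.exp 1 := by rw [hQc]; congr 1; field_simp
  have hE2 : ((A*C)/G)^MM ≤ Real.exp (-1 + 1/G) := by
    have hpt : (A*C)/G ≤ Real.exp (-(1/G)) := by
      have h1 := Real.add_one_le_exp (-(1/G))
      have heq : (A*C)/G = -(1/G) + 1 := by rw [hG]; field_simp; ring
      rw [heq]; exact h1
    calc ((A*C)/G)^MM ≤ (Real.exp (-(1/G)))^MM :=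
          pow_le_pow_left₀ (le_of_lt (div_pos hSpos hGpos)) hpt MM
      _ = Real.exp ((MM:ℝ) * (-(1/G))) := (Real.exp_nat_mul _ MM).symm
      _ = Real.exp (-1 + 1/G) := by
          rw [hSc]; congr 1
          rw [hG]; field_simp; ring
  have step2 : (Real.exp u / Real.sqrt π) * (Real.sqrt (2*(A*B)) / (Real.sqrt (2*D) * Real.sqrt (2*G)))
        * ((A * (A/D)^kk * ((A*C)/G)^MM / G) * Bk)
      ≤ (Real.exp u / Real.sqrt π) * (Real.sqrt (2*(A*B)) / (Real.sqrt (2*D) * Real.sqrt (2*G)))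
        * ((A * Real.exp 1 * Real.exp (-1 + 1/G) / G) * Bk) := by
    apply mul_le_mul_of_nonneg_left _ (by positivity)
    apply mul_le_mul_of_nonneg_right _ hBkpos.le
    apply (div_le_div_iff_of_pos_right hGpos).mpr
    apply mul_le_mul (mul_le_mul_of_nonneg_left hE1 hApos.le) hE2
      (le_of_lt (pow_pos (div_pos hSpos hGpos) _))
      (le_of_lt (mul_pos hApos (Real.exp_pos 1)))
  -- core scalar inequality
  have C1 : Real.exp (1/G) * (A*C) ≤ G := by
    have h1 : 1 - 1/G ≤ Real.exp (-(1/G)) := by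
      have := Real.add_one_le_exp (-(1/G)); linarith
    have h2 : A*C = G * (1 - 1/G) := by rw [hG]; field_simp; ring
    calc Real.exp (1/G) * (A*C) = Real.exp (1/G) * (G * (1 - 1/G)) := by rw [← h2]
      _ ≤ Real.exp (1/G) * (G * Real.exp (-(1/G))) := by
          apply mul_le_mul_of_nonneg_left _ (Real.exp_nonneg _)
          exact mul_le_mul_of_nonneg_left h1 (le_of_lt hGpos)
      _ = G := by rw [mul_comm G, ← mul_assoc, ← Real.exp_add]; simp
  have C2 : Real.exp u * Real.sqrt (A*C) ≤ Real.sqrt G := by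
    have h2u : Real.exp (2*u) * (A*C) ≤ G := by
      have h1 : 1 - 2*u ≤ Real.exp (-(2*u)) := by
        have := Real.add_one_le_exp (-(2*u)); linarith
      have huR : 2*u*G ≤ 1 := by
        rw [hu, show 2*(1/(4*(A*B)-2))*G = (2*G)/(4*(A*B)-2) by field_simp]
        rw [div_le_one h4P]
        exact hPR
      have h3 : A*C ≤ (1 - 2*u) * G := by
        have hexp : (1 - 2*u)*G = G - 2*u*G := by ring
        have hGS : G = A*C + 1 := hG
        rw [hexp]; linarith
      have h4 : A*C ≤ Real.exp (-(2*u)) * G :=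
        le_trans h3 (mul_le_mul_of_nonneg_right h1 (le_of_lt hGpos))
      calc Real.exp (2*u) * (A*C) ≤ Real.exp (2*u) * (Real.exp (-(2*u)) * G) :=
            mul_le_mul_of_nonneg_left h4 (Real.exp_nonneg _)
        _ = G := by rw [← mul_assoc, ← Real.exp_add]; simp
    have hkey : Real.sqrt (Real.exp (2*u) * (A*C)) = Real.exp u * Real.sqrt (A*C) := by
      rw [Real.sqrt_mul (Real.exp_nonneg _)]
      congr 1
      rw [show (2:ℝ)*u = ((2:ℕ):ℝ)*u by norm_num, Real.exp_nat_mul,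
        Real.sqrt_sq (Real.exp_nonneg u)]
    calc Real.exp u * Real.sqrt (A*C) = Real.sqrt (Real.exp (2*u) * (A*C)) := hkey.symm
      _ ≤ Real.sqrt G := Real.sqrt_le_sqrt h2u
  have core : Real.exp u * (Real.exp 1 * Real.exp (-1+1/G)) * ((A*C) * Real.sqrt (A*C))
      ≤ Real.exp (1/600) * (G * Real.sqrt G) := by
    have hee : Real.exp 1 * Real.exp (-1+1/G) = Real.exp (1/G) := by
      rw [← Real.exp_add]; norm_num
    rw [hee]
    have m1 : (Real.exp (1/G)*(A*C)) * (Real.exp u*Real.sqrt (A*C)) ≤ G*Real.sqrt G :=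
      mul_le_mul C1 C2 (by positivity) (le_of_lt hGpos)
    have m2 : G*Real.sqrt G ≤ Real.exp (1/600)*(G*Real.sqrt G) :=
      le_mul_of_one_le_left (mul_nonneg hGpos.le (Real.sqrt_nonneg _)) (Real.one_le_exp (by norm_num))
    calc Real.exp u * Real.exp (1/G) * ((A*C)*Real.sqrt (A*C))
        = (Real.exp (1/G)*(A*C))*(Real.exp u*Real.sqrt (A*C)) := by ring
      _ ≤ G*Real.sqrt G := m1
      _ ≤ _ := m2
  -- sqrt decompositions
  have d1 : Real.sqrt (2*(A*B)) = Real.sqrt 2 * Real.sqrt (A*B) := Real.sqrt_mul (by norm_num) _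
  have d2 : Real.sqrt (2*D) = Real.sqrt 2 * Real.sqrt D := Real.sqrt_mul (by norm_num) D
  have d3 : Real.sqrt (2*G) = Real.sqrt 2 * Real.sqrt G := Real.sqrt_mul (by norm_num) G
  have d4 : Real.sqrt (2*π*D) = Real.sqrt 2 * (Real.sqrt π * Real.sqrt D) := by
    rw [show 2*π*D = 2*(π*D) by ring, Real.sqrt_mul (by norm_num), Real.sqrt_mul pi_pos.le]
  have d5 : Real.sqrt (1+1/C) = Real.sqrt (A*B) / Real.sqrt (A*C) := by
    rw [show 1+1/C = (A*B)/(A*C) by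
        rw [hBC, mul_div_mul_left _ _ hAne]; field_simp,
      Real.sqrt_div hABpos.le]
  have hsAB : (0:ℝ) < Real.sqrt (A*B) := Real.sqrt_pos.mpr hABpos
  have hsD : (0:ℝ) < Real.sqrt D := Real.sqrt_pos.mpr hDpos
  have hsG : (0:ℝ) < Real.sqrt G := Real.sqrt_pos.mpr hGpos
  have hsS : (0:ℝ) < Real.sqrt (A*C) := Real.sqrt_pos.mpr hSpos
  have hs2 : (0:ℝ) < Real.sqrt 2 := by positivity
  have star : (Real.exp u / Real.sqrt π) * (Real.sqrt (2*(A*B))/(Real.sqrt (2*D)*Real.sqrt (2*G)))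
        * (A * Real.exp 1 * Real.exp (-1 + 1/G) / G)
      ≤ Real.exp (1/600)/C * (1/Real.sqrt (2*π*D)) * Real.sqrt (1+1/C) := by
    rw [d1, d2, d3, d4, d5]
    have hA' : (Real.exp u / Real.sqrt π) * ((Real.sqrt 2*Real.sqrt (A*B))/((Real.sqrt 2*Real.sqrt D)*(Real.sqrt 2*Real.sqrt G)))
          * (A * Real.exp 1 * Real.exp (-1 + 1/G) / G)
        = (Real.sqrt (A*B)/(Real.sqrt π*Real.sqrt 2*Real.sqrt D))
          * ((Real.exp u * (A*Real.exp 1*Real.exp (-1+1/G)))/(G*Real.sqrt G)) := by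
      field_simp
    have hB' : Real.exp (1/600)/C * (1/(Real.sqrt 2*(Real.sqrt π*Real.sqrt D))) * (Real.sqrt (A*B)/Real.sqrt (A*C))
        = (Real.sqrt (A*B)/(Real.sqrt π*Real.sqrt 2*Real.sqrt D))
          * (Real.exp (1/600)/(C*Real.sqrt (A*C))) := by
      field_simp
    rw [hA', hB']
    apply mul_le_mul_of_nonneg_left _ (by positivity)
    rw [div_le_div_iff₀ (mul_pos hGpos hsG) (mul_pos hCpos hsS)]
    calc Real.exp u * (A*Real.exp 1*Real.exp (-1+1/G)) * (C*Real.sqrt (A*C))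
        = Real.exp u * (Real.exp 1*Real.exp (-1+1/G)) * ((A*C) * Real.sqrt (A*C)) := by ring
      _ ≤ Real.exp (1/600) * (G * Real.sqrt G) := core
      _ = Real.exp (1/600) * (G*Real.sqrt G) := rfl
  calc (Nat.factorial nn : ℝ) / ((Nat.factorial kk : ℝ) * (Nat.factorial mm : ℝ))
      ≤ (Real.exp u / Real.sqrt π) * (Real.sqrt (2*(A*B)) / (Real.sqrt (2*D) * Real.sqrt (2*G)))
        * ((A * (A/D)^kk * ((A*C)/G)^MM / G) * Bk) := step1
    _ ≤ (Real.exp u / Real.sqrt π) * (Real.sqrt (2*(A*B)) / (Real.sqrt (2*D) * Real.sqrt (2*G)))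
        * ((A * Real.exp 1 * Real.exp (-1 + 1/G) / G) * Bk) := step2
    _ = ((Real.exp u / Real.sqrt π) * (Real.sqrt (2*(A*B)) / (Real.sqrt (2*D) * Real.sqrt (2*G)))
        * (A * Real.exp 1 * Real.exp (-1 + 1/G) / G)) * Bk := by ring
    _ ≤ (Real.exp (1/600)/C * (1/Real.sqrt (2*π*D)) * Real.sqrt (1+1/C)) * Bk :=
        mul_le_mul_of_nonneg_right star hBkpos.le
end
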